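/- For every n≥1, the number of permutations of {1,…,n} avoiding the classical pattern 1-3-2 and the generalized pattern 12-3 (indices i with π(i)<π(i+1) and j>i+1 with π(i+1)<π(j) — i.e. an occurrence is positions i,i+1,j with π(i)<π(i+1)<π(j)) equals 2^{n−1}, and the same count holds with 12-3 replaced by 21-3 (positions i,i+1,j with j>i+1 and π(i+1)<π(i)<π(j)). Equivalently F_{12-3}(x) = F_{21-3}(x) = (1−x)/(1−2x). -/

import Mathlib

open Finset PowerSeries

/-- A generalized pattern in the sense of Babson–Steingrímsson: a permutation of
`Fin k` together with a set of (0-indexed) positions `j` such that the letters in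
positions `j` and `j+1` must be adjacent in any occurrence. -/
structure GenPattern (k : ℕ) where
  perm : Equiv.Perm (Fin k)
  adj : Set ℕ

/-- `f` is an occurrence of the generalized pattern `p` in the permutation `π`. -/
def GenPattern.Occ {k n : ℕ} (p : GenPattern k) (π : Equiv.Perm (Fin n))
    (f : Fin k → Fin n) : Prop :=
  StrictMono f ∧
  (∀ a b : Fin k, π (f a) < π (f b) ↔ p.perm a < p.perm b) ∧
  (∀ j : ℕ, j ∈ p.adj → ∀ hj : j + 1 < k,
    ((f ⟨j + 1, hj⟩ : ℕ) = (f ⟨j, by omega⟩ : ℕ) + 1))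

/-- `π` avoids the generalized pattern `p`. -/
def GenPattern.Avoids {k n : ℕ} (p : GenPattern k) (π : Equiv.Perm (Fin n)) : Prop :=
  ¬ ∃ f, p.Occ π f

/-- `π` contains exactly one occurrence of the generalized pattern `p`. -/
def GenPattern.ContainsOnce {k n : ℕ} (p : GenPattern k) (π : Equiv.Perm (Fin n)) : Prop :=
  ∃! f, p.Occ π f

/-- The classical pattern 1-3-2 (as a generalized pattern with no adjacencies). -/
def pat132 : GenPattern 3 := ⟨Equiv.swap 1 2, ∅⟩

/-- `F_τ(x)`: generating function for permutations avoiding 1-3-2 and `p`. -/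
noncomputable def Fgen {k : ℕ} (p : GenPattern k) : PowerSeries ℚ :=
  PowerSeries.mk fun n =>
    (Nat.card {π : Equiv.Perm (Fin n) // pat132.Avoids π ∧ p.Avoids π} : ℚ)

/-- `G_τ(x)`: generating function for permutations avoiding 1-3-2 and containing
`p` exactly once. -/
noncomputable def Ggen {k : ℕ} (p : GenPattern k) : PowerSeries ℚ :=
  PowerSeries.mk fun n =>
    (Nat.card {π : Equiv.Perm (Fin n) // pat132.Avoids π ∧ p.ContainsOnce π} : ℚ)

/-- `H_τ(x)`: generating function for permutations containing 1-3-2 exactly once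
and avoiding `p`. -/
noncomputable def Hgen {k : ℕ} (p : GenPattern k) : PowerSeries ℚ :=
  PowerSeries.mk fun n =>
    (Nat.card {π : Equiv.Perm (Fin n) // pat132.ContainsOnce π ∧ p.Avoids π} : ℚ)

/-- `Φ_τ(x)`: generating function for permutations containing both 1-3-2 and `p`
exactly once. -/
noncomputable def Phigen {k : ℕ} (p : GenPattern k) : PowerSeries ℚ :=
  PowerSeries.mk fun n =>
    (Nat.card {π : Equiv.Perm (Fin n) // pat132.ContainsOnce π ∧ p.ContainsOnce π} : ℚ)

/-- `G_β^φ(x)`: generating function for permutations avoiding 1-3-2 and `φ` and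
containing `β` exactly once. -/
noncomputable def Ggen2 {k l : ℕ} (β : GenPattern k) (φ : GenPattern l) : PowerSeries ℚ :=
  PowerSeries.mk fun n =>
    (Nat.card {π : Equiv.Perm (Fin n) //
      pat132.Avoids π ∧ φ.Avoids π ∧ β.ContainsOnce π} : ℚ)

/-- `V k = x^(k/2) · U_k(1/(2√x))`, the rescaled Chebyshev polynomials of the
second kind: `V 0 = V 1 = 1`, `V (k+2) = V (k+1) - x · V k`. -/
noncomputable def V : ℕ → PowerSeries ℚ
  | 0 => 1
  | 1 => 1
  | (k + 2) => V (k + 1) - PowerSeries.X * V k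

/-- Position `i` is a right-to-left maximum of `φ`. -/
def IsRLMax {k : ℕ} (φ : Equiv.Perm (Fin k)) (i : Fin k) : Prop :=
  ∀ j : Fin k, i < j → φ j < φ i

/-- `ρ` is the order-isomorphic reduction of the contiguous segment of `τ` of
length `t` starting at position `s` (adjacency requirements restricted to the
segment and shifted accordingly). -/
def IsReduction {k t : ℕ} (τ : GenPattern k) (s : ℕ) (ρ : GenPattern t) : Prop :=
  s + t ≤ k ∧
  (∀ (a b : Fin t) (ha : s + (a : ℕ) < k) (hb : s + (b : ℕ) < k),
    (ρ.perm a < ρ.perm b ↔ τ.perm ⟨s + a, ha⟩ < τ.perm ⟨s + b, hb⟩)) ∧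
  (∀ j : ℕ, j ∈ ρ.adj ↔ (s + j) ∈ τ.adj ∧ j + 1 < t)

/-- The generalized pattern 12-3. -/
def pat12d3 : GenPattern 3 := ⟨1, {0}⟩

/-- The generalized pattern 21-3. -/
def pat21d3 : GenPattern 3 := ⟨Equiv.swap 0 1, {0}⟩


namespace St19


lemma htri : ∀ a : Fin 3, a = 0 ∨ a = 1 ∨ a = 2 := by decide

lemma strictMono3 {n : ℕ} {x y z : Fin n} (h1 : x < y) (h2 : y < z) :
    StrictMono ![x, y, z] := by
  intro a b hab
  fin_cases a <;> fin_cases b <;>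
    first
      | exact absurd hab (by decide)
      | simpa using h1
      | simpa using h2
      | simpa using h1.trans h2

lemma mk132occ {n : ℕ} (π : Equiv.Perm (Fin n)) {i j k : Fin n}
    (hij : i < j) (hjk : j < k) (h1 : π i < π k) (h2 : π k < π j) :
    ∃ f, pat132.Occ π f := by
  have h3 : π i < π j := h1.trans h2
  refine ⟨![i, j, k], strictMono3 hij hjk, ?_, ?_⟩
  · intro a b
    rcases htri a with rfl|rfl|rfl <;> rcases htri b with rfl|rfl|rfl <;>
      first
        | exact iff_of_false (lt_irrefl _) (by decide)
        | exact iff_of_true h3 (by decide)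
        | exact iff_of_true h1 (by decide)
        | exact iff_of_true h2 (by decide)
        | exact iff_of_false h3.asymm (by decide)
        | exact iff_of_false h1.asymm (by decide)
        | exact iff_of_false h2.asymm (by decide)
  · intro j hj _
    exact absurd hj (by simp [pat132])

lemma occ132_elim {n : ℕ} {π : Equiv.Perm (Fin n)} (h : ∃ f, pat132.Occ π f) :
    ∃ i j k : Fin n, i < j ∧ j < k ∧ π i < π k ∧ π k < π j := by
  obtain ⟨f, hsm, hord, -⟩ := h
  exact ⟨f 0, f 1, f 2, hsm (by decide), hsm (by decide),
    (hord 0 2).2 (by decide), (hord 2 1).2 (by decide)⟩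

lemma mk12d3occ {n : ℕ} (π : Equiv.Perm (Fin n)) {i j : Fin n} (hi1 : (i:ℕ) + 1 < n)
    (hij : (i:ℕ) + 1 < (j:ℕ)) (h1 : π i < π ⟨(i:ℕ)+1, hi1⟩) (h2 : π ⟨(i:ℕ)+1, hi1⟩ < π j) :
    ∃ f, pat12d3.Occ π f := by
  have h3 : π i < π j := h1.trans h2
  have hlt1 : i < (⟨(i:ℕ)+1, hi1⟩ : Fin n) := by rw [Fin.lt_def]; exact Nat.lt_succ_self _
  have hlt2 : (⟨(i:ℕ)+1, hi1⟩ : Fin n) < j := by rw [Fin.lt_def]; exact hij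
  refine ⟨![i, ⟨(i:ℕ)+1, hi1⟩, j], strictMono3 hlt1 hlt2, ?_, ?_⟩
  · intro a b
    rcases htri a with rfl|rfl|rfl <;> rcases htri b with rfl|rfl|rfl <;>
      first
        | exact iff_of_false (lt_irrefl _) (by decide)
        | exact iff_of_true h3 (by decide)
        | exact iff_of_true h1 (by decide)
        | exact iff_of_true h2 (by decide)
        | exact iff_of_false h3.asymm (by decide)
        | exact iff_of_false h1.asymm (by decide)
        | exact iff_of_false h2.asymm (by decide)
  · intro m hm hm3
    have : m = 0 := by simpa [pat12d3] using hm
    subst this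
    rfl

lemma occ12d3_elim {n : ℕ} {π : Equiv.Perm (Fin n)} (h : ∃ f, pat12d3.Occ π f) :
    ∃ (i j : Fin n) (hi1 : (i:ℕ)+1 < n), (i:ℕ) + 1 < (j:ℕ) ∧
      π i < π ⟨(i:ℕ)+1, hi1⟩ ∧ π ⟨(i:ℕ)+1, hi1⟩ < π j := by
  obtain ⟨f, hsm, hord, hadj⟩ := h
  have hadj0 : (f 1 : ℕ) = (f 0 : ℕ) + 1 := hadj 0 (by simp [pat12d3]) (by omega)
  have hi1 : (f 0 : ℕ) + 1 < n := hadj0 ▸ (f 1).isLt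
  have hf1 : f 1 = ⟨(f 0 : ℕ) + 1, hi1⟩ := Fin.ext hadj0
  refine ⟨f 0, f 2, hi1, ?_, ?_, ?_⟩
  · have h12 : f 1 < f 2 := hsm (by decide)
    rw [Fin.lt_def] at h12; omega
  · rw [← hf1]; exact (hord 0 1).2 (by decide)
  · rw [← hf1]; exact (hord 1 2).2 (by decide)

lemma mk21d3occ {n : ℕ} (π : Equiv.Perm (Fin n)) {i j : Fin n} (hi1 : (i:ℕ) + 1 < n)
    (hij : (i:ℕ) + 1 < (j:ℕ)) (h1 : π ⟨(i:ℕ)+1, hi1⟩ < π i) (h2 : π i < π j) :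
    ∃ f, pat21d3.Occ π f := by
  have h3 : π ⟨(i:ℕ)+1, hi1⟩ < π j := h1.trans h2
  have hlt1 : i < (⟨(i:ℕ)+1, hi1⟩ : Fin n) := by rw [Fin.lt_def]; exact Nat.lt_succ_self _
  have hlt2 : (⟨(i:ℕ)+1, hi1⟩ : Fin n) < j := by rw [Fin.lt_def]; exact hij
  refine ⟨![i, ⟨(i:ℕ)+1, hi1⟩, j], strictMono3 hlt1 hlt2, ?_, ?_⟩
  · intro a b
    rcases htri a with rfl|rfl|rfl <;> rcases htri b with rfl|rfl|rfl <;>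
      first
        | exact iff_of_false (lt_irrefl _) (by decide)
        | exact iff_of_true h3 (by decide)
        | exact iff_of_true h1 (by decide)
        | exact iff_of_true h2 (by decide)
        | exact iff_of_false h3.asymm (by decide)
        | exact iff_of_false h1.asymm (by decide)
        | exact iff_of_false h2.asymm (by decide)
  · intro m hm hm3
    have : m = 0 := by simpa [pat21d3] using hm
    subst this
    rfl

lemma occ21d3_elim {n : ℕ} {π : Equiv.Perm (Fin n)} (h : ∃ f, pat21d3.Occ π f) :
    ∃ (i j : Fin n) (hi1 : (i:ℕ)+1 < n), (i:ℕ) + 1 < (j:ℕ) ∧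
      π ⟨(i:ℕ)+1, hi1⟩ < π i ∧ π i < π j := by
  obtain ⟨f, hsm, hord, hadj⟩ := h
  have hadj0 : (f 1 : ℕ) = (f 0 : ℕ) + 1 := hadj 0 (by simp [pat21d3]) (by omega)
  have hi1 : (f 0 : ℕ) + 1 < n := hadj0 ▸ (f 1).isLt
  have hf1 : f 1 = ⟨(f 0 : ℕ) + 1, hi1⟩ := Fin.ext hadj0
  refine ⟨f 0, f 2, hi1, ?_, ?_, ?_⟩
  · have h12 : f 1 < f 2 := hsm (by decide)
    rw [Fin.lt_def] at h12; omega
  · rw [← hf1]; exact (hord 1 0).2 (by decide)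
  · exact (hord 0 2).2 (by decide)



lemma chain_mono (g : ℕ → ℕ) {i j : ℕ} (h : i ≤ j)
    (hd : ∀ t, i ≤ t → t < j → g t ≤ g (t+1)) : g i ≤ g j := by
  induction j, h using Nat.le_induction with
  | base => exact le_refl _
  | succ j hj ih =>
    exact (ih (fun t ht htj => hd t ht (by omega))).trans (hd j hj (by omega))

lemma chain_anti (g : ℕ → ℕ) {i j : ℕ} (h : i ≤ j)
    (hd : ∀ t, i ≤ t → t < j → g (t+1) ≤ g t) : g j ≤ g i := by
  induction j, h using Nat.le_induction with
  | base => exact le_refl _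
  | succ j hj ih =>
    exact (hd j hj (by omega)).trans (ih (fun t ht htj => hd t ht (by omega)))

lemma exists_asc (g : ℕ → ℕ) {i j : ℕ} (hij : i < j) (h : g i < g j) :
    ∃ t, i ≤ t ∧ t < j ∧ g t < g (t+1) := by
  by_contra hc
  push_neg at hc
  exact absurd (chain_anti g hij.le hc) (by omega)

lemma exists_desc (g : ℕ → ℕ) {i j : ℕ} (hij : i < j) (h : g j < g i) :
    ∃ t, i ≤ t ∧ t < j ∧ g (t+1) < g t := by
  by_contra hc
  push_neg at hc
  exact absurd (chain_mono g hij.le hc) (by omega)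

-- Fin-level versions
lemma fin_exists_asc {n : ℕ} (π : Equiv.Perm (Fin n)) {i j : Fin n} (hij : i < j)
    (h : π i < π j) :
    ∃ (t : ℕ) (h1 : t < n) (h2 : t + 1 < n),
      (i:ℕ) ≤ t ∧ t + 1 ≤ (j:ℕ) ∧ π ⟨t, h1⟩ < π ⟨t+1, h2⟩ := by
  set g : ℕ → ℕ := fun m => if h : m < n then (π ⟨m, h⟩ : ℕ) else 0 with hg
  have hgi : g (i:ℕ) = (π i : ℕ) := by simp [hg]
  have hgj : g (j:ℕ) = (π j : ℕ) := by simp [hg]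
  obtain ⟨t, ht1, ht2, ht3⟩ := exists_asc g (show (i:ℕ) < j from hij) (by rw [hgi, hgj]; exact h)
  have h2 : t + 1 < n := lt_of_le_of_lt ht2 j.isLt
  have h1 : t < n := by omega
  refine ⟨t, h1, h2, ht1, by omega, ?_⟩
  rw [Fin.lt_def]
  have e1 : g t = (π ⟨t, h1⟩ : ℕ) := by simp [hg, h1]
  have e2 : g (t+1) = (π ⟨t+1, h2⟩ : ℕ) := by simp [hg, h2]
  rw [e1, e2] at ht3
  exact ht3

lemma fin_exists_desc {n : ℕ} (π : Equiv.Perm (Fin n)) {i j : Fin n} (hij : i < j)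
    (h : π j < π i) :
    ∃ (t : ℕ) (h1 : t < n) (h2 : t + 1 < n),
      (i:ℕ) ≤ t ∧ t + 1 ≤ (j:ℕ) ∧ π ⟨t+1, h2⟩ < π ⟨t, h1⟩ := by
  set g : ℕ → ℕ := fun m => if h : m < n then (π ⟨m, h⟩ : ℕ) else 0 with hg
  have hgi : g (i:ℕ) = (π i : ℕ) := by simp [hg]
  have hgj : g (j:ℕ) = (π j : ℕ) := by simp [hg]
  obtain ⟨t, ht1, ht2, ht3⟩ := exists_desc g (show (i:ℕ) < j from hij) (by rw [hgi, hgj]; exact h)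
  have h2 : t + 1 < n := lt_of_le_of_lt ht2 j.isLt
  have h1 : t < n := by omega
  refine ⟨t, h1, h2, ht1, by omega, ?_⟩
  rw [Fin.lt_def]
  have e1 : g t = (π ⟨t, h1⟩ : ℕ) := by simp [hg, h1]
  have e2 : g (t+1) = (π ⟨t+1, h2⟩ : ℕ) := by simp [hg, h2]
  rw [e1, e2] at ht3
  exact ht3


lemma claimA {n : ℕ} {π : Equiv.Perm (Fin n)} (h132 : pat132.Avoids π) (h21 : pat21d3.Avoids π)
    {i t j : Fin n} (h1 : i < t) (h2 : t < j) (hij : π i < π j) :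
    π i < π t ∧ π t < π j := by
  have htj : π t < π j := by
    rcases lt_trichotomy (π t) (π j) with h | h | h
    · exact h
    · exact absurd (π.injective h ▸ h2) (lt_irrefl _)
    · exact absurd (mk132occ π h1 h2 hij h) h132
  refine ⟨?_, htj⟩
  rcases lt_trichotomy (π i) (π t) with h | h | h
  · exact h
  · exact absurd (π.injective h ▸ h1) (lt_irrefl _)
  · exfalso
    obtain ⟨s, hs1, hs2, hsle, hslt, hdesc⟩ := fin_exists_desc π h1 h
    have h2v : (t:ℕ) < (j:ℕ) := h2
    have hsv : ((⟨s, hs1⟩ : Fin n) : ℕ) = s := rfl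
    have hSj : (⟨s, hs1⟩ : Fin n) < j := by rw [Fin.lt_def]; omega
    rcases lt_trichotomy (π ⟨s, hs1⟩) (π j) with hc | hc | hc
    · exact absurd (mk21d3occ π hs2 (by omega) hdesc hc) h21
    · have he : (⟨s, hs1⟩ : Fin n) = j := π.injective hc
      have : s = (j:ℕ) := congrArg Fin.val he
      omega
    · rcases eq_or_lt_of_le hsle with he | hlt
      · have : i = (⟨s, hs1⟩ : Fin n) := Fin.ext he
        rw [← this] at hc
        exact absurd (hij.trans hc) (lt_irrefl _)
      · exact absurd (mk132occ π (show i < (⟨s, hs1⟩ : Fin n) from hlt) hSj hij hc) h132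

def CondA {n : ℕ} (π : Equiv.Perm (Fin n)) : Prop :=
  ∀ i j : Fin n, i < j → π i < π j → (π j : ℕ) + (i : ℕ) = (π i : ℕ) + (j : ℕ)

def CondB {n : ℕ} (π : Equiv.Perm (Fin n)) : Prop :=
  ∀ i j k : Fin n, i < j → i < k → π i < π j → π k ≤ π j

lemma condA_iff {n : ℕ} (π : Equiv.Perm (Fin n)) :
    (pat132.Avoids π ∧ pat21d3.Avoids π) ↔ CondA π := by
  constructor
  · rintro ⟨h132, h21⟩ i j hij hπ
    have himg : Finset.image π (Finset.Ioo i j) = Finset.Ioo (π i) (π j) := by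
      ext v
      simp only [Finset.mem_image, Finset.mem_Ioo]
      constructor
      · rintro ⟨t, ⟨ht1, ht2⟩, rfl⟩
        exact claimA h132 h21 ht1 ht2 hπ
      · rintro ⟨hv1, hv2⟩
        refine ⟨π.symm v, ⟨?_, ?_⟩, π.apply_symm_apply v⟩
        · rcases lt_trichotomy i (π.symm v) with hh | hh | hh
          · exact hh
          · exfalso
            rw [hh, π.apply_symm_apply] at hv1
            exact absurd hv1 (lt_irrefl _)
          · exfalso
            have hvj : π (π.symm v) < π j := by rw [π.apply_symm_apply]; exact hv2
            have := (claimA h132 h21 hh hij hvj).1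
            rw [π.apply_symm_apply] at this
            exact absurd (hv1.trans this) (lt_irrefl _)
        · rcases lt_trichotomy (π.symm v) j with hh | hh | hh
          · exact hh
          · exfalso
            rw [← hh, π.apply_symm_apply] at hv2
            exact absurd hv2 (lt_irrefl _)
          · exfalso
            have hiv : π i < π (π.symm v) := by rw [π.apply_symm_apply]; exact hv1
            have := (claimA h132 h21 hij hh hiv).2
            rw [π.apply_symm_apply] at this
            exact absurd (hv2.trans this) (lt_irrefl _)
    have hcard : (Finset.Ioo i j).card = (Finset.Ioo (π i) (π j)).card := by
      rw [← himg, Finset.card_image_of_injective _ π.injective]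
    rw [Fin.card_Ioo, Fin.card_Ioo] at hcard
    have hijv : (i:ℕ) < (j:ℕ) := hij
    have hπv : (π i:ℕ) < (π j:ℕ) := hπ
    omega
  · intro hC
    constructor
    · intro hocc
      obtain ⟨a, b, c, hab, hbc, h1, h2⟩ := occ132_elim hocc
      have e1 := hC a b hab (h1.trans h2)
      have e2 := hC a c (hab.trans hbc) h1
      have hbcv : (b:ℕ) < (c:ℕ) := hbc
      have h2v : (π c:ℕ) < (π b:ℕ) := h2
      omega
    · intro hocc
      obtain ⟨a, b, ha1, hab, h1, h2⟩ := occ21d3_elim hocc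
      have e1 := hC a b (by rw [Fin.lt_def]; omega) h2
      have e2 := hC ⟨(a:ℕ)+1, ha1⟩ b (by rw [Fin.lt_def]; exact hab) (h1.trans h2)
      have h1v : (π ⟨(a:ℕ)+1, ha1⟩ : ℕ) < (π a : ℕ) := h1
      have hav : ((⟨(a:ℕ)+1, ha1⟩ : Fin n) : ℕ) = (a:ℕ)+1 := rfl
      omega
lemma condB_iff {n : ℕ} (π : Equiv.Perm (Fin n)) :
    (pat132.Avoids π ∧ pat12d3.Avoids π) ↔ CondB π := by
  constructor
  · rintro ⟨h132, h12⟩ i j k hij hik hπ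
    by_contra hc
    rw [not_le] at hc
    rcases lt_trichotomy k j with hkj | rfl | hjk
    · exact absurd (mk132occ π hik hkj hπ hc) h132
    · exact absurd hc (lt_irrefl _)
    · obtain ⟨t, ht1, ht2, htle, htlt, hasc⟩ := fin_exists_asc π hij hπ
      have hjkv : (j:ℕ) < (k:ℕ) := hjk
      have hikv : (i:ℕ) ≤ t := htle
      have htv : ((⟨t+1, ht2⟩ : Fin n) : ℕ) = t + 1 := rfl
      rcases lt_trichotomy (π ⟨t+1, ht2⟩) (π k) with hc2 | hc2 | hc2
      · exact absurd (mk12d3occ π ht2 (show t + 1 < (k:ℕ) by omega) hasc hc2) h12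
      · have he : (⟨t+1, ht2⟩ : Fin n) = k := π.injective hc2
        have : t + 1 = (k:ℕ) := congrArg Fin.val he
        omega
      · refine absurd (mk132occ π (show i < (⟨t+1, ht2⟩ : Fin n) from ?_)
          (show (⟨t+1, ht2⟩ : Fin n) < k from ?_) (hπ.trans hc) hc2) h132
        · rw [Fin.lt_def]; omega
        · rw [Fin.lt_def]; omega
  · intro hB
    constructor
    · intro hocc
      obtain ⟨a, b, c, hab, hbc, h1, h2⟩ := occ132_elim hocc
      exact absurd (hB a c b (hab.trans hbc) hab h1) (not_le.mpr h2)
    · intro hocc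
      obtain ⟨a, b, ha1, hab, h1, h2⟩ := occ12d3_elim hocc
      refine absurd (hB a ⟨(a:ℕ)+1, ha1⟩ b ?_ ?_ h1) (not_le.mpr h2)
      · rw [Fin.lt_def]; exact Nat.lt_succ_self _
      · rw [Fin.lt_def]; omega
lemma succAbove_val {n : ℕ} (v : Fin (n+1)) (x : Fin n) :
    (v.succAbove x : ℕ) = if (x:ℕ) < (v:ℕ) then (x:ℕ) else (x:ℕ) + 1 := by
  rw [Fin.succAbove]
  by_cases h : (x:ℕ) < (v:ℕ)
  · rw [if_pos h, if_pos (by rwa [Fin.lt_def])]; rfl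
  · rw [if_neg h, if_neg (by rwa [Fin.lt_def])]; rfl

noncomputable def appendPerm {n : ℕ} (π : Equiv.Perm (Fin n)) (v : Fin (n+1)) :
    Equiv.Perm (Fin (n+1)) :=
  Equiv.ofBijective (fun i => Fin.lastCases v (fun j => v.succAbove (π j)) i)
    (Finite.injective_iff_bijective.mp (by
      intro a b hab
      induction a using Fin.lastCases with
      | last =>
        induction b using Fin.lastCases with
        | last => rfl
        | cast b' =>
          simp only [Fin.lastCases_last, Fin.lastCases_castSucc] at hab
          exact absurd hab.symm (Fin.succAbove_ne v (π b'))
      | cast a' =>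
        induction b using Fin.lastCases with
        | last =>
          simp only [Fin.lastCases_last, Fin.lastCases_castSucc] at hab
          exact absurd hab (Fin.succAbove_ne v (π a'))
        | cast b' =>
          simp only [Fin.lastCases_castSucc] at hab
          rw [π.injective (Fin.succAbove_right_injective hab)]))

@[simp] lemma appendPerm_castSucc {n : ℕ} (π : Equiv.Perm (Fin n)) (v : Fin (n+1)) (j : Fin n) :
    appendPerm π v (Fin.castSucc j) = v.succAbove (π j) := by
  simp [appendPerm, Equiv.ofBijective]

@[simp] lemma appendPerm_last {n : ℕ} (π : Equiv.Perm (Fin n)) (v : Fin (n+1)) :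
    appendPerm π v (Fin.last n) = v := by
  simp [appendPerm, Equiv.ofBijective]

lemma appendPerm_inj {n : ℕ} {π π' : Equiv.Perm (Fin n)} {v v' : Fin (n+1)}
    (h : appendPerm π v = appendPerm π' v') : π = π' ∧ v = v' := by
  have hv : v = v' := by
    have := congrFun (congrArg (fun e => (e : Equiv.Perm (Fin (n+1))).toFun) h) (Fin.last n)
    simpa using this
  subst hv
  refine ⟨Equiv.ext fun j => ?_, rfl⟩
  have := congrFun (congrArg (fun e => (e : Equiv.Perm (Fin (n+1))).toFun) h) (Fin.castSucc j)
  simp only [Equiv.toFun_as_coe, appendPerm_castSucc] at this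
  exact Fin.succAbove_right_injective this

lemma appendPerm_surj {n : ℕ} (π' : Equiv.Perm (Fin (n+1))) :
    ∃ (π : Equiv.Perm (Fin n)) (v : Fin (n+1)), appendPerm π v = π' := by
  have hbij : Function.Bijective
      (fun p : Equiv.Perm (Fin n) × Fin (n+1) => appendPerm p.1 p.2) := by
    rw [Fintype.bijective_iff_injective_and_card]
    constructor
    · intro p q h
      obtain ⟨h1, h2⟩ := appendPerm_inj h
      exact Prod.ext h1 h2
    · simp [Fintype.card_perm, Fintype.card_fin, Nat.factorial_succ, mul_comm]
  obtain ⟨⟨π, v⟩, h⟩ := hbij.2 π'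
  exact ⟨π, v, h⟩

noncomputable def prependPerm {n : ℕ} (π : Equiv.Perm (Fin n)) (v : Fin (n+1)) :
    Equiv.Perm (Fin (n+1)) :=
  Equiv.ofBijective (fun i => Fin.cases v (fun j => v.succAbove (π j)) i)
    (Finite.injective_iff_bijective.mp (by
      intro a b hab
      induction a using Fin.cases with
      | zero =>
        induction b using Fin.cases with
        | zero => rfl
        | succ b' =>
          simp only [Fin.cases_zero, Fin.cases_succ] at hab
          exact absurd hab.symm (Fin.succAbove_ne v (π b'))
      | succ a' =>
        induction b using Fin.cases with
        | zero =>
          simp only [Fin.cases_zero, Fin.cases_succ] at hab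
          exact absurd hab (Fin.succAbove_ne v (π a'))
        | succ b' =>
          simp only [Fin.cases_succ] at hab
          rw [π.injective (Fin.succAbove_right_injective hab)]))

@[simp] lemma prependPerm_succ {n : ℕ} (π : Equiv.Perm (Fin n)) (v : Fin (n+1)) (j : Fin n) :
    prependPerm π v (Fin.succ j) = v.succAbove (π j) := by
  simp [prependPerm, Equiv.ofBijective]

@[simp] lemma prependPerm_zero {n : ℕ} (π : Equiv.Perm (Fin n)) (v : Fin (n+1)) :
    prependPerm π v 0 = v := by
  simp [prependPerm, Equiv.ofBijective]

lemma prependPerm_inj {n : ℕ} {π π' : Equiv.Perm (Fin n)} {v v' : Fin (n+1)}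
    (h : prependPerm π v = prependPerm π' v') : π = π' ∧ v = v' := by
  have hv : v = v' := by
    have := congrFun (congrArg (fun e => (e : Equiv.Perm (Fin (n+1))).toFun) h) 0
    simpa using this
  subst hv
  refine ⟨Equiv.ext fun j => ?_, rfl⟩
  have := congrFun (congrArg (fun e => (e : Equiv.Perm (Fin (n+1))).toFun) h) (Fin.succ j)
  simp only [Equiv.toFun_as_coe, prependPerm_succ] at this
  exact Fin.succAbove_right_injective this

lemma prependPerm_surj {n : ℕ} (π' : Equiv.Perm (Fin (n+1))) :
    ∃ (π : Equiv.Perm (Fin n)) (v : Fin (n+1)), prependPerm π v = π' := by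
  have hbij : Function.Bijective
      (fun p : Equiv.Perm (Fin n) × Fin (n+1) => prependPerm p.1 p.2) := by
    rw [Fintype.bijective_iff_injective_and_card]
    constructor
    · intro p q h
      obtain ⟨h1, h2⟩ := prependPerm_inj h
      exact Prod.ext h1 h2
    · simp [Fintype.card_perm, Fintype.card_fin, Nat.factorial_succ, mul_comm]
  obtain ⟨⟨π, v⟩, h⟩ := hbij.2 π'
  exact ⟨π, v, h⟩
lemma condA_append {n : ℕ} {π : Equiv.Perm (Fin (n+1))} (h : CondA π) (v : Fin (n+2))
    (hv : (v:ℕ) = 0 ∨ (v:ℕ) = (π (Fin.last n) : ℕ) + 1) :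
    CondA (appendPerm π v) := by
  have hLv : ((Fin.last n : Fin (n+1)) : ℕ) = n := rfl
  intro i j hij hasc
  induction j using Fin.lastCases with
  | last =>
    induction i using Fin.lastCases with
    | last => exact absurd hij (lt_irrefl _)
    | cast i' =>
      have hasc' : (if (π i':ℕ) < (v:ℕ) then (π i':ℕ) else (π i':ℕ)+1) < (v:ℕ) := by
        rw [Fin.lt_def, appendPerm_castSucc, appendPerm_last, succAbove_val] at hasc
        exact hasc
      have gi : ((appendPerm π v) (Fin.castSucc i') : ℕ)
          = if (π i':ℕ) < (v:ℕ) then (π i':ℕ) else (π i':ℕ)+1 := by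
        rw [appendPerm_castSucc, succAbove_val]
      have gl : ((appendPerm π v) (Fin.last (n+1)) : ℕ) = (v:ℕ) := by
        rw [appendPerm_last]
      rw [gi, gl, Fin.coe_castSucc, Fin.val_last]
      rcases lt_or_ge (π i' : ℕ) (v:ℕ) with c1 | c1
      · rw [if_pos c1] at hasc' ⊢
        rcases hv with hv | hv
        · omega
        · rcases lt_trichotomy (π i' : ℕ) ((π (Fin.last n) : ℕ)) with c2 | c2 | c2
          · have hiL : i' < Fin.last n := by
              rw [Fin.lt_def, Fin.val_last]
              have hle : (i':ℕ) < n + 1 := i'.isLt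
              rcases Nat.lt_or_ge (i':ℕ) n with hc | hc
              · exact hc
              · exfalso
                have : i' = Fin.last n := Fin.ext (by rw [Fin.val_last]; omega)
                rw [this] at c2
                exact lt_irrefl _ c2
            have e1 := h i' (Fin.last n) hiL (by rw [Fin.lt_def]; exact c2)
            rw [Fin.val_last] at e1
            omega
          · have : i' = Fin.last n := π.injective (Fin.ext c2)
            have : (i':ℕ) = n := by rw [this, Fin.val_last]
            omega
          · omega
      · rw [if_neg (not_lt.mpr c1)] at hasc' ⊢
        omega
  | cast j' =>
    induction i using Fin.lastCases with
    | last =>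
      exfalso
      rw [Fin.lt_def, Fin.val_last, Fin.coe_castSucc] at hij
      have := j'.isLt
      omega
    | cast i' =>
      have hij' : i' < j' := by rwa [Fin.castSucc_lt_castSucc_iff] at hij
      have hππ : π i' < π j' := by
        rw [appendPerm_castSucc, appendPerm_castSucc] at hasc
        exact Fin.succAbove_lt_succAbove_iff.mp hasc
      have e1 := h i' j' hij' hππ
      have gi : ((appendPerm π v) (Fin.castSucc i') : ℕ)
          = if (π i':ℕ) < (v:ℕ) then (π i':ℕ) else (π i':ℕ)+1 := by
        rw [appendPerm_castSucc, succAbove_val]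
      have gj : ((appendPerm π v) (Fin.castSucc j') : ℕ)
          = if (π j':ℕ) < (v:ℕ) then (π j':ℕ) else (π j':ℕ)+1 := by
        rw [appendPerm_castSucc, succAbove_val]
      have hππv : (π i' : ℕ) < (π j' : ℕ) := hππ
      have hijv : (i' : ℕ) < (j' : ℕ) := hij'
      rw [gi, gj, Fin.coe_castSucc, Fin.coe_castSucc]
      rcases lt_or_ge (π i' : ℕ) (v:ℕ) with c1 | c1 <;>
        rcases lt_or_ge (π j' : ℕ) (v:ℕ) with c2 | c2
      · rw [if_pos c1, if_pos c2]; omega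
      · rw [if_pos c1, if_neg (not_lt.mpr c2)]
        exfalso
        rcases hv with hv | hv
        · omega
        · -- straddle impossible
          have hine : (i':ℕ) < n := by
            have := j'.isLt; omega
          rcases lt_trichotomy (π i' : ℕ) ((π (Fin.last n) : ℕ)) with c3 | c3 | c3
          · have e2 := h i' (Fin.last n) (by rw [Fin.lt_def, Fin.val_last]; exact hine)
              (by rw [Fin.lt_def]; exact c3)
            rw [Fin.val_last] at e2
            have := j'.isLt
            omega
          · have : i' = Fin.last n := π.injective (Fin.ext c3)
            have : (i':ℕ) = n := by rw [this, Fin.val_last]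
            omega
          · omega
      · rw [if_neg (not_lt.mpr c1), if_pos c2]; omega
      · rw [if_neg (not_lt.mpr c1), if_neg (not_lt.mpr c2)]; omega

lemma condA_of_append {n : ℕ} {π : Equiv.Perm (Fin (n+1))} {v : Fin (n+2)}
    (h : CondA (appendPerm π v)) :
    CondA π ∧ ((v:ℕ) = 0 ∨ (v:ℕ) = (π (Fin.last n) : ℕ) + 1) := by
  have hval : (v:ℕ) = 0 ∨ (v:ℕ) = (π (Fin.last n) : ℕ) + 1 := by
    rcases Nat.eq_zero_or_pos (v:ℕ) with h0 | hpos
    · exact Or.inl h0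
    · right
      have hv1 : (v:ℕ) - 1 < n + 1 := by have := v.isLt; omega
      set x : Fin (n+1) := ⟨(v:ℕ)-1, hv1⟩ with hx
      set t : Fin (n+1) := π.symm x with ht
      have hπt : π t = x := π.apply_symm_apply x
      have hA : ((appendPerm π v) (Fin.castSucc t) : ℕ) = (v:ℕ) - 1 := by
        rw [appendPerm_castSucc, hπt, succAbove_val, if_pos (show (x:ℕ) < (v:ℕ) from by rw [hx]; exact Nat.sub_lt hpos Nat.one_pos)]
      have hlt : Fin.castSucc t < Fin.last (n+1) := by
        rw [Fin.lt_def, Fin.coe_castSucc, Fin.val_last]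
        have := t.isLt; omega
      have hasc : (appendPerm π v) (Fin.castSucc t) < (appendPerm π v) (Fin.last (n+1)) := by
        rw [Fin.lt_def, hA, appendPerm_last]
        omega
      have e1 := h _ _ hlt hasc
      rw [hA, Fin.coe_castSucc, Fin.val_last] at e1
      have hAl : ((appendPerm π v) (Fin.last (n+1)) : ℕ) = (v:ℕ) := by rw [appendPerm_last]
      rw [hAl] at e1
      have htn : (t:ℕ) = n := by have := t.isLt; omega
      have htL : t = Fin.last n := Fin.ext (by rw [Fin.val_last]; exact htn)
      rw [← htL, hπt, hx]
      simp; omega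
  refine ⟨?_, hval⟩
  intro i j hij hasc
  have hasc2 : (appendPerm π v) (Fin.castSucc i) < (appendPerm π v) (Fin.castSucc j) := by
    rw [appendPerm_castSucc, appendPerm_castSucc]
    exact Fin.succAbove_lt_succAbove_iff.mpr hasc
  have e1 := h _ _ (Fin.castSucc_lt_castSucc_iff.mpr hij) hasc2
  have gi : ((appendPerm π v) (Fin.castSucc i) : ℕ)
      = if (π i:ℕ) < (v:ℕ) then (π i:ℕ) else (π i:ℕ)+1 := by
    rw [appendPerm_castSucc, succAbove_val]
  have gj : ((appendPerm π v) (Fin.castSucc j) : ℕ)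
      = if (π j:ℕ) < (v:ℕ) then (π j:ℕ) else (π j:ℕ)+1 := by
    rw [appendPerm_castSucc, succAbove_val]
  rw [gi, gj, Fin.coe_castSucc, Fin.coe_castSucc] at e1
  have hππv : (π i : ℕ) < (π j : ℕ) := hasc
  have hijv : (i : ℕ) < (j : ℕ) := hij
  rcases lt_or_ge (π i : ℕ) (v:ℕ) with c1 | c1 <;>
    rcases lt_or_ge (π j : ℕ) (v:ℕ) with c2 | c2
  · rw [if_pos c1, if_pos c2] at e1; omega
  · rw [if_pos c1, if_neg (not_lt.mpr c2)] at e1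
    exfalso
    rcases hval with hv | hv
    · omega
    · have hine : (i:ℕ) < n := by have := j.isLt; omega
      rcases lt_trichotomy (π i : ℕ) ((π (Fin.last n) : ℕ)) with c3 | c3 | c3
      · have hasc3 : (appendPerm π v) (Fin.castSucc i) < (appendPerm π v) (Fin.castSucc (Fin.last n)) := by
          rw [appendPerm_castSucc, appendPerm_castSucc]
          exact Fin.succAbove_lt_succAbove_iff.mpr (by rw [Fin.lt_def]; exact c3)
        have e2 := h _ _ (Fin.castSucc_lt_castSucc_iff.mpr
          (by rw [Fin.lt_def, Fin.val_last]; exact hine)) hasc3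
        have gL : ((appendPerm π v) (Fin.castSucc (Fin.last n)) : ℕ)
            = if ((π (Fin.last n)):ℕ) < (v:ℕ) then ((π (Fin.last n)):ℕ) else ((π (Fin.last n)):ℕ)+1 := by
          rw [appendPerm_castSucc, succAbove_val]
        rw [gi, gL, Fin.coe_castSucc, Fin.coe_castSucc, Fin.val_last] at e2
        rw [if_pos c1, if_pos (by omega)] at e2
        have := j.isLt
        omega
      · have : i = Fin.last n := π.injective (Fin.ext c3)
        have : (i:ℕ) = n := by rw [this, Fin.val_last]
        omega
      · omega
  · rw [if_neg (not_lt.mpr c1), if_pos c2] at e1; omega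
  · rw [if_neg (not_lt.mpr c1), if_neg (not_lt.mpr c2)] at e1; omega
lemma condB_prepend {n : ℕ} {π : Equiv.Perm (Fin (n+1))} (h : CondB π) (v : Fin (n+2))
    (hv : (v:ℕ) = n ∨ (v:ℕ) = n + 1) :
    CondB (prependPerm π v) := by
  intro i j k hij hik hasc
  induction i using Fin.cases with
  | zero =>
    induction j using Fin.cases with
    | zero => exact absurd hij (lt_irrefl _)
    | succ j' =>
      induction k using Fin.cases with
      | zero => exact absurd hik (lt_irrefl _)
      | succ k' =>
        have hjv : (v:ℕ) < (if (π j':ℕ) < (v:ℕ) then (π j':ℕ) else (π j':ℕ)+1) := by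
          rw [Fin.lt_def, prependPerm_zero, prependPerm_succ, succAbove_val] at hasc
          exact hasc
        rw [Fin.le_def, prependPerm_succ, prependPerm_succ, succAbove_val, succAbove_val]
        have hb1 : (π j' : ℕ) < n + 1 := (π j').isLt
        have hb2 : (π k' : ℕ) < n + 1 := (π k').isLt
        rcases hv with hv | hv
        · rcases lt_or_ge (π j':ℕ) (v:ℕ) with c2 | c2
          · rw [if_pos c2] at hjv; omega
          · rw [if_neg (not_lt.mpr c2)] at hjv ⊢
            rcases lt_or_ge (π k':ℕ) (v:ℕ) with c3 | c3
            · rw [if_pos c3]; omega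
            · rw [if_neg (not_lt.mpr c3)]; omega
        · rcases lt_or_ge (π j':ℕ) (v:ℕ) with c2 | c2
          · rw [if_pos c2] at hjv; omega
          · rw [if_neg (not_lt.mpr c2)] at hjv; omega
  | succ i' =>
    induction j using Fin.cases with
    | zero =>
      exfalso
      rw [Fin.lt_def, Fin.val_succ] at hij
      simp at hij
    | succ j' =>
      induction k using Fin.cases with
      | zero =>
        exfalso
        rw [Fin.lt_def, Fin.val_succ] at hik
        simp at hik
      | succ k' =>
        have hij' : i' < j' := by
          rw [Fin.lt_def, Fin.val_succ, Fin.val_succ] at hij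
          rw [Fin.lt_def]; omega
        have hik' : i' < k' := by
          rw [Fin.lt_def, Fin.val_succ, Fin.val_succ] at hik
          rw [Fin.lt_def]; omega
        have hππ : π i' < π j' := by
          rw [prependPerm_succ, prependPerm_succ] at hasc
          exact Fin.succAbove_lt_succAbove_iff.mp hasc
        have := h i' j' k' hij' hik' hππ
        rw [prependPerm_succ, prependPerm_succ]
        exact Fin.succAbove_le_succAbove_iff.mpr this

lemma condB_of_prepend {n : ℕ} {π : Equiv.Perm (Fin (n+1))} {v : Fin (n+2)}
    (h : CondB (prependPerm π v)) :
    CondB π ∧ ((v:ℕ) = n ∨ (v:ℕ) = n + 1) := by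
  constructor
  · intro i j k hij hik hasc
    have hsij : Fin.succ i < Fin.succ j := by
      rw [Fin.lt_def, Fin.val_succ, Fin.val_succ]
      have : (i:ℕ) < (j:ℕ) := hij
      omega
    have hsik : Fin.succ i < Fin.succ k := by
      rw [Fin.lt_def, Fin.val_succ, Fin.val_succ]
      have : (i:ℕ) < (k:ℕ) := hik
      omega
    have := h (Fin.succ i) (Fin.succ j) (Fin.succ k) hsij hsik
      (by rw [prependPerm_succ, prependPerm_succ]
          exact Fin.succAbove_lt_succAbove_iff.mpr hasc)
    rw [prependPerm_succ, prependPerm_succ] at this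
    exact Fin.succAbove_le_succAbove_iff.mp this
  · rcases Nat.lt_or_ge (v:ℕ) n with hlt | hge
    · exfalso
      set p : Fin (n+1) := π.symm (Fin.last n) with hp
      set q : Fin (n+1) := π.symm ⟨n-1, by omega⟩ with hq
      have hPp : ((prependPerm π v) (Fin.succ p) : ℕ) = n + 1 := by
        rw [prependPerm_succ, hp, π.apply_symm_apply, succAbove_val, Fin.val_last,
          if_neg (by omega)]
      have hPq : ((prependPerm π v) (Fin.succ q) : ℕ) = n := by
        rw [prependPerm_succ, hq, π.apply_symm_apply, succAbove_val]
        have : ((⟨n-1, by omega⟩ : Fin (n+1)) : ℕ) = n - 1 := rfl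
        rw [this, if_neg (by omega)]
        omega
      have hasc : (prependPerm π v) 0 < (prependPerm π v) (Fin.succ q) := by
        rw [Fin.lt_def, prependPerm_zero, hPq]
        exact hlt
      have := h 0 (Fin.succ q) (Fin.succ p) (Fin.succ_pos q) (Fin.succ_pos p) hasc
      rw [Fin.le_def, hPp, hPq] at this
      omega
    · have := v.isLt
      omega
lemma condA_low {n : ℕ} (hn : n ≤ 1) (π : Equiv.Perm (Fin n)) : CondA π := by
  intro i j hij _
  have h1 : (i:ℕ) < n := i.isLt
  have h2 : (j:ℕ) < n := j.isLt
  have h3 : (i:ℕ) < (j:ℕ) := hij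
  omega

lemma condB_low {n : ℕ} (hn : n ≤ 1) (π : Equiv.Perm (Fin n)) : CondB π := by
  intro i j k hij _ _
  have h1 : (i:ℕ) < n := i.isLt
  have h2 : (j:ℕ) < n := j.isLt
  have h3 : (i:ℕ) < (j:ℕ) := hij
  omega

lemma card_perm_low {n : ℕ} (hn : n ≤ 1) (C : Equiv.Perm (Fin n) → Prop)
    (hC : ∀ π, C π) : Nat.card {π : Equiv.Perm (Fin n) // C π} = 1 := by
  rw [Nat.card_congr (Equiv.subtypeUnivEquiv hC), Nat.card_eq_fintype_card,
    Fintype.card_perm, Fintype.card_fin]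
  interval_cases n <;> rfl

lemma countA_two_mul (n : ℕ) :
    Nat.card {π' : Equiv.Perm (Fin (n+2)) // CondA π'}
      = 2 * Nat.card {π : Equiv.Perm (Fin (n+1)) // CondA π} := by
  have hbij : Function.Bijective
      (fun p : Bool × {π : Equiv.Perm (Fin (n+1)) // CondA π} =>
        (⟨appendPerm p.2.1 (if p.1 then Fin.succ (p.2.1 (Fin.last n)) else 0),
          condA_append p.2.2 _ (by
            rcases p with ⟨b, π, hπ⟩
            cases b
            · left; rfl
            · right; simp [Fin.val_succ])⟩ :
          {π' : Equiv.Perm (Fin (n+2)) // CondA π'})) := by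
    constructor
    · rintro ⟨b, π, hπ⟩ ⟨b', π', hπ'⟩ hFF
      simp only [Subtype.mk.injEq] at hFF
      obtain ⟨hperm, hvv⟩ := appendPerm_inj hFF
      subst hperm
      have hb : b = b' := by
        cases b <;> cases b'
        · rfl
        · simp only [if_true, if_false] at hvv
          exact absurd hvv.symm (Fin.succ_ne_zero _)
        · simp only [if_true, if_false] at hvv
          exact absurd hvv (Fin.succ_ne_zero _)
        · rfl
      subst hb
      rfl
    · rintro ⟨π', h'⟩
      obtain ⟨σ, v, rfl⟩ := appendPerm_surj π'
      obtain ⟨hσ, hval⟩ := condA_of_append h'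
      rcases hval with hval | hval
      · refine ⟨(false, ⟨σ, hσ⟩), Subtype.ext ?_⟩
        simp only [if_false]
        congr 1
        exact (Fin.ext hval).symm
      · refine ⟨(true, ⟨σ, hσ⟩), Subtype.ext ?_⟩
        simp only [if_true]
        congr 1
        exact Fin.ext (by rw [Fin.val_succ, hval])
  rw [← Nat.card_eq_of_bijective _ hbij, Nat.card_prod]
  congr 1
  simp [Nat.card_eq_fintype_card]

lemma countB_two_mul (n : ℕ) :
    Nat.card {π' : Equiv.Perm (Fin (n+2)) // CondB π'}
      = 2 * Nat.card {π : Equiv.Perm (Fin (n+1)) // CondB π} := by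
  have hbij : Function.Bijective
      (fun p : Bool × {π : Equiv.Perm (Fin (n+1)) // CondB π} =>
        (⟨prependPerm p.2.1 (if p.1 then Fin.last (n+1) else Fin.castSucc (Fin.last n)),
          condB_prepend p.2.2 _ (by
            rcases p with ⟨b, π, hπ⟩
            cases b
            · left; simp
            · right; simp [Fin.val_last])⟩ :
          {π' : Equiv.Perm (Fin (n+2)) // CondB π'})) := by
    constructor
    · rintro ⟨b, π, hπ⟩ ⟨b', π', hπ'⟩ hFF
      simp only [Subtype.mk.injEq] at hFF
      obtain ⟨hperm, hvv⟩ := prependPerm_inj hFF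
      subst hperm
      have hb : b = b' := by
        cases b <;> cases b'
        · rfl
        · exfalso
          rw [if_neg Bool.false_ne_true, if_pos rfl] at hvv
          have := congrArg Fin.val hvv
          simp only [Fin.coe_castSucc, Fin.val_last] at this
          omega
        · exfalso
          rw [if_pos rfl, if_neg Bool.false_ne_true] at hvv
          have := congrArg Fin.val hvv
          simp only [Fin.coe_castSucc, Fin.val_last] at this
          omega
        · rfl
      subst hb
      rfl
    · rintro ⟨π', h'⟩
      obtain ⟨σ, v, rfl⟩ := prependPerm_surj π'
      obtain ⟨hσ, hval⟩ := condB_of_prepend h'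
      rcases hval with hval | hval
      · refine ⟨(false, ⟨σ, hσ⟩), Subtype.ext ?_⟩
        show prependPerm σ (if (false : Bool) = true then Fin.last (n+1)
          else Fin.castSucc (Fin.last n)) = prependPerm σ v
        rw [if_neg Bool.false_ne_true]
        congr 1
        exact Fin.ext (by rw [Fin.coe_castSucc, Fin.val_last, hval])
      · refine ⟨(true, ⟨σ, hσ⟩), Subtype.ext ?_⟩
        show prependPerm σ (if (true : Bool) = true then Fin.last (n+1)
          else Fin.castSucc (Fin.last n)) = prependPerm σ v
        rw [if_pos rfl]
        congr 1
        exact Fin.ext (by rw [Fin.val_last, hval])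
  rw [← Nat.card_eq_of_bijective _ hbij, Nat.card_prod]
  congr 1
  simp [Nat.card_eq_fintype_card]

lemma countA_pow (n : ℕ) :
    Nat.card {π : Equiv.Perm (Fin (n+1)) // CondA π} = 2 ^ n := by
  induction n with
  | zero => exact card_perm_low (by omega) _ (condA_low (by omega))
  | succ m ih => rw [countA_two_mul m, ih, pow_succ, mul_comm]

lemma countB_pow (n : ℕ) :
    Nat.card {π : Equiv.Perm (Fin (n+1)) // CondB π} = 2 ^ n := by
  induction n with
  | zero => exact card_perm_low (by omega) _ (condB_low (by omega))
  | succ m ih => rw [countB_two_mul m, ih, pow_succ, mul_comm]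

lemma cardA (n : ℕ) :
    Nat.card {π : Equiv.Perm (Fin n) // pat132.Avoids π ∧ pat21d3.Avoids π}
      = if n = 0 then 1 else 2 ^ (n - 1) := by
  have he : Nat.card {π : Equiv.Perm (Fin n) // pat132.Avoids π ∧ pat21d3.Avoids π}
      = Nat.card {π : Equiv.Perm (Fin n) // CondA π} :=
    Nat.card_congr (Equiv.subtypeEquivRight fun π => condA_iff π)
  rw [he]
  cases n with
  | zero => rw [if_pos rfl]; exact card_perm_low (by omega) _ (condA_low (by omega))
  | succ m => rw [if_neg (by omega)]; simpa using countA_pow m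

lemma cardB (n : ℕ) :
    Nat.card {π : Equiv.Perm (Fin n) // pat132.Avoids π ∧ pat12d3.Avoids π}
      = if n = 0 then 1 else 2 ^ (n - 1) := by
  have he : Nat.card {π : Equiv.Perm (Fin n) // pat132.Avoids π ∧ pat12d3.Avoids π}
      = Nat.card {π : Equiv.Perm (Fin n) // CondB π} :=
    Nat.card_congr (Equiv.subtypeEquivRight fun π => condB_iff π)
  rw [he]
  cases n with
  | zero => rw [if_pos rfl]; exact card_perm_low (by omega) _ (condB_low (by omega))
  | succ m => rw [if_neg (by omega)]; simpa using countB_pow m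
lemma ps_lemma (p : GenPattern 3)
    (hc : ∀ n : ℕ, Nat.card {π : Equiv.Perm (Fin n) // pat132.Avoids π ∧ p.Avoids π}
      = if n = 0 then 1 else 2 ^ (n - 1)) :
    (1 - 2 * PowerSeries.X) * Fgen p = 1 - PowerSeries.X := by
  have hC2 : (2 : PowerSeries ℚ) = PowerSeries.C (2 : ℚ) := (map_ofNat (PowerSeries.C (R := ℚ)) 2).symm
  have hassoc : (2 : PowerSeries ℚ) * PowerSeries.X * Fgen p
      = PowerSeries.C (2 : ℚ) * (PowerSeries.X * Fgen p) := by
    rw [← hC2, mul_assoc]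
  ext n
  rw [sub_mul, one_mul, map_sub, map_sub, hassoc, PowerSeries.coeff_C_mul,
    PowerSeries.coeff_one, PowerSeries.coeff_X]
  cases n with
  | zero =>
    rw [if_pos rfl, if_neg (by omega)]
    simp only [PowerSeries.coeff_zero_X_mul, Fgen, PowerSeries.coeff_mk, hc 0]
    norm_num
  | succ m =>
    rw [if_neg (by omega), PowerSeries.coeff_succ_X_mul]
    simp only [Fgen, PowerSeries.coeff_mk, hc (m+1), hc m, if_neg (Nat.succ_ne_zero m)]
    cases m with
    | zero => norm_num
    | succ l =>
      rw [if_neg (Nat.succ_ne_zero l), if_neg (by omega)]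
      simp only [Nat.add_sub_cancel]
      push_cast
      ring

end St19

/-- For `n ≥ 1` the number of permutations of `{1,…,n}` avoiding 1-3-2 and 12-3
equals `2^{n−1}`, and likewise for 21-3; equivalently
`F_{12-3} = F_{21-3} = (1−x)/(1−2x)`. -/
theorem statement19 :
    (∀ n : ℕ, 1 ≤ n → Nat.card {π : Equiv.Perm (Fin n) //
        pat132.Avoids π ∧ pat12d3.Avoids π} = 2 ^ (n - 1)) ∧
    (∀ n : ℕ, 1 ≤ n → Nat.card {π : Equiv.Perm (Fin n) //
        pat132.Avoids π ∧ pat21d3.Avoids π} = 2 ^ (n - 1)) ∧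
    (1 - 2 * PowerSeries.X) * Fgen pat12d3 = 1 - PowerSeries.X ∧
    (1 - 2 * PowerSeries.X) * Fgen pat21d3 = 1 - PowerSeries.X := by
  refine ⟨?_, ?_, ?_, ?_⟩
  · intro n hn
    rw [St19.cardB n, if_neg (by omega)]
  · intro n hn
    rw [St19.cardA n, if_neg (by omega)]
  · exact St19.ps_lemma pat12d3 St19.cardB
  · exact St19.ps_lemma pat21d3 St19.cardA
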